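/- Fix an integer t ≥ 1 and an integer n ≥ 0. For every subset S ⊆ {1,…,n}, the weight v satisfies v(S) = v(S^rev), where S^rev = {n+1−s : s ∈ S}. -/

import Mathlib

/-- The `t`-analogue `[k] = 1 + t + ⋯ + t^(k-1)`. -/
def tnum (t k : ℕ) : ℕ := ∑ i ∈ Finset.range k, t ^ i

/-- Auxiliary product defining the weight `w`: given the previous entry `p` and the
sorted list of remaining entries, multiply the factors `[s - p + 1]`. -/
def wAux (t : ℕ) : ℕ → List ℕ → ℕ
  | _, [] => 1
  | p, s :: rest => tnum t (s - p + 1) * wAux t s rest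

/-- The weight `w(S) = [s₁]·[s₂-s₁+1]⋯[s_k-s_{k-1}+1]` for `S = {s₁ < ⋯ < s_k}`,
with `w(∅) = 1`. -/
def wWeight (t : ℕ) (S : Finset ℕ) : ℕ := wAux t 1 (S.sort (· ≤ ·))

/-- The weight `v(S) = w(S ∪ {n+1}) - w(S)` for nonempty `S ⊆ {1,…,n}`, and
`v(∅) = t·[n]`. -/
def vWeight (t n : ℕ) (S : Finset ℕ) : ℤ :=
  if S = ∅ then t * tnum t n else (wWeight t (S ∪ {n + 1}) : ℤ) - (wWeight t S : ℤ)

/-- Symmetric auxiliary product: for `l = [s₁,…,s_k]`,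
`sAux t p l q = [s₁-p]·[s₂-s₁+1]⋯[s_k-s_{k-1}+1]·[q-s_k-1]`, with
`sAux t p [] q = [q-p-2]`. -/
def sAux (t : ℕ) : ℕ → List ℕ → ℕ → ℕ
  | p, [], q => tnum t (q - p - 2)
  | p, s :: rest, q => tnum t (s - p) * sAux t (s - 1) rest q

lemma tnum_succ (t m : ℕ) : tnum t (m + 1) = 1 + t * tnum t m := by
  unfold tnum
  rw [geom_sum_succ]
  ring

/-- Appending one element at the end of the list in `sAux`. -/
lemma sAux_append (t : ℕ) : ∀ (l : List ℕ) (p q x : ℕ), 1 ≤ x → x + 1 ≤ q → p ≤ x →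
    (∀ a ∈ l, a ≤ x) →
    sAux t p (l ++ [x]) q = sAux t p l (x + 2) * tnum t (q - x - 1) := by
  intro l
  induction l with
  | nil =>
    intro p q x h1 h2 h3 _
    show tnum t (x - p) * tnum t (q - (x - 1) - 2) = tnum t (x + 2 - p - 2) * tnum t (q - x - 1)
    have e1 : q - (x - 1) - 2 = q - x - 1 := by omega
    have e2 : x + 2 - p - 2 = x - p := by omega
    rw [e1, e2]
  | cons a l ih =>
    intro p q x h1 h2 h3 h4
    show tnum t (a - p) * sAux t (a - 1) (l ++ [x]) q
        = tnum t (a - p) * sAux t (a - 1) l (x + 2) * tnum t (q - x - 1)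
    rw [ih (a - 1) q x h1 h2 (by have := h4 a (by simp); omega)
      (fun b hb => h4 b (by simp [hb]))]
    ring

/-- Reversal symmetry of `sAux`. -/
lemma sAux_rev (t c : ℕ) : ∀ (l : List ℕ) (p q : ℕ), l.Pairwise (· < ·) →
    (∀ s ∈ l, 1 ≤ s ∧ p ≤ s ∧ s + 1 ≤ q ∧ s + 1 ≤ c) → p ≤ q → q ≤ c + 1 →
    sAux t p l q = sAux t (c + 1 - q) ((l.map (fun s => c - s)).reverse) (c + 1 - p) := by
  intro l
  induction l with
  | nil =>
    intro p q _ _ hpq hqc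
    show tnum t (q - p - 2) = tnum t (c + 1 - p - (c + 1 - q) - 2)
    congr 1
    omega
  | cons s rest ih =>
    intro p q hsort hmem hpq hqc
    obtain ⟨hs1, hps, hsq, hsc⟩ := hmem s (by simp)
    have hrest : ∀ r ∈ rest, s < r := fun r hr => (List.pairwise_cons.1 hsort).1 r hr
    have hrev : ((s :: rest).map (fun a => c - a)).reverse
        = (rest.map (fun a => c - a)).reverse ++ [c - s] := by
      simp
    rw [hrev]
    rw [sAux_append t _ _ _ _ (by omega) (by omega) (by omega)
      (by
        intro a ha
        simp only [List.mem_reverse, List.mem_map] at ha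
        obtain ⟨r, hr, rfl⟩ := ha
        have := hrest r hr
        omega)]
    show tnum t (s - p) * sAux t (s - 1) rest q
        = sAux t (c + 1 - q) ((rest.map (fun a => c - a)).reverse) (c - s + 2)
          * tnum t (c + 1 - p - (c - s) - 1)
    rw [ih (s - 1) q (List.pairwise_cons.1 hsort).2
      (fun r hr => by
        obtain ⟨h1, _, h2, h3⟩ := hmem r (by simp [hr])
        exact ⟨h1, by have := hrest r hr; omega, h2, h3⟩)
      (by omega) hqc]
    have e1 : c + 1 - (s - 1) = c - s + 2 := by omega
    have e2 : c + 1 - p - (c - s) - 1 = s - p := by omega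
    rw [e1, e2]
    ring

/-- The key identity: appending `q-1` to the list multiplies–and–subtracts as `t·sAux`. -/
lemma wAux_append (t : ℕ) : ∀ (l : List ℕ) (p q : ℕ), l.Pairwise (· < ·) →
    (∀ s ∈ l, p + 1 ≤ s ∧ s + 2 ≤ q) → p + 2 ≤ q →
    wAux t (p + 1) (l ++ [q - 1]) = wAux t (p + 1) l + t * sAux t p l q := by
  intro l
  induction l with
  | nil =>
    intro p q _ _ hpq
    show tnum t (q - 1 - (p + 1) + 1) * 1 = 1 + t * tnum t (q - p - 2)
    have e1 : q - 1 - (p + 1) + 1 = (q - p - 2) + 1 := by omega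
    rw [e1, tnum_succ, mul_one]
  | cons s rest ih =>
    intro p q hsort hmem hpq
    obtain ⟨hps, hsq⟩ := hmem s (by simp)
    have hrest : ∀ r ∈ rest, s < r := fun r hr => (List.pairwise_cons.1 hsort).1 r hr
    show tnum t (s - (p + 1) + 1) * wAux t s (rest ++ [q - 1])
        = tnum t (s - (p + 1) + 1) * wAux t s rest + t * (tnum t (s - p) * sAux t (s - 1) rest q)
    have hs : s = (s - 1) + 1 := by omega
    have key : wAux t s (rest ++ [q - 1]) = wAux t s rest + t * sAux t (s - 1) rest q := by
      rw [hs]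
      exact ih (s - 1) q (List.pairwise_cons.1 hsort).2
        (fun r hr => ⟨by have := hrest r hr; omega, (hmem r (by simp [hr])).2⟩)
        (by omega)
    rw [key]
    have e1 : s - (p + 1) + 1 = s - p := by omega
    rw [e1]
    ring

lemma sort_union_top (S : Finset ℕ) (m : ℕ) (h : ∀ s ∈ S, s < m) :
    (S ∪ {m}).sort (· ≤ ·) = S.sort (· ≤ ·) ++ [m] := by
  have hnd : (S.sort (· ≤ ·) ++ [m]).Nodup := by
    rw [List.nodup_append]
    refine ⟨Finset.sort_nodup _ _, List.nodup_singleton m, ?_⟩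
    intro a ha b hb hab; subst hab
    simp only [List.mem_singleton] at hb
    subst hb
    exact absurd (h a ((Finset.mem_sort _).1 ha)) (lt_irrefl _)
  have hfs : (S.sort (· ≤ ·) ++ [m]).toFinset = S ∪ {m} := by
    rw [List.toFinset_append, Finset.sort_toFinset]
    simp
  have hsorted : (S.sort (· ≤ ·) ++ [m]).Pairwise (· ≤ ·) := by
    rw [List.pairwise_append]
    refine ⟨Finset.pairwise_sort _ _, List.pairwise_singleton _ _, ?_⟩
    intro a ha b hb
    simp only [List.mem_singleton] at hb
    subst hb
    exact le_of_lt (h a ((Finset.mem_sort _).1 ha))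
  rw [← hfs]
  exact (List.toFinset_sort (· ≤ ·) hnd).2 hsorted

lemma sort_image_rev (S : Finset ℕ) (n : ℕ) (hS : S ⊆ Finset.Icc 1 n) :
    (S.image (fun s => n + 1 - s)).sort (· ≤ ·)
      = ((S.sort (· ≤ ·)).map (fun s => n + 1 - s)).reverse := by
  have hmemS : ∀ a ∈ S.sort (· ≤ ·), 1 ≤ a ∧ a ≤ n := by
    intro a ha
    have := hS ((Finset.mem_sort _).1 ha)
    exact Finset.mem_Icc.1 this
  have hnd : (((S.sort (· ≤ ·)).map (fun s => n + 1 - s)).reverse).Nodup := by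
    rw [List.nodup_reverse]
    refine List.Nodup.map_on ?_ (Finset.sort_nodup _ _)
    intro a ha b hb hab
    have h1 := hmemS a ha
    have h2 := hmemS b hb
    omega
  have hfs : (((S.sort (· ≤ ·)).map (fun s => n + 1 - s)).reverse).toFinset
      = S.image (fun s => n + 1 - s) := by
    ext x
    simp only [List.mem_toFinset, List.mem_reverse, List.mem_map, Finset.mem_image,
      Finset.mem_sort]
  have hsorted : (((S.sort (· ≤ ·)).map (fun s => n + 1 - s)).reverse).Pairwise (· ≤ ·) := by
    rw [List.pairwise_reverse, List.pairwise_map]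
    refine List.Pairwise.imp ?_ ((Finset.sortedLT_sort S).pairwise)
    intro a b hab
    omega
  rw [← hfs]
  exact (List.toFinset_sort (· ≤ ·) hnd).2 hsorted

/-- `v(S) = t · sAux t 0 (sort S) (n+2)` for `S ⊆ {1,…,n}`. -/
lemma vWeight_eq_sAux (t n : ℕ) (S : Finset ℕ) (hS : S ⊆ Finset.Icc 1 n) :
    vWeight t n S = t * sAux t 0 (S.sort (· ≤ ·)) (n + 2) := by
  by_cases hSe : S = ∅
  · subst hSe
    simp only [vWeight, if_pos rfl, Finset.sort_empty]
    show (t : ℤ) * tnum t n = t * tnum t (n + 2 - 0 - 2)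
    norm_num
  · have hmemS : ∀ a ∈ S.sort (· ≤ ·), 1 ≤ a ∧ a ≤ n := by
      intro a ha
      exact Finset.mem_Icc.1 (hS ((Finset.mem_sort _).1 ha))
    rw [vWeight, if_neg hSe]
    unfold wWeight
    rw [sort_union_top S (n + 1) (fun s hs => by have := Finset.mem_Icc.1 (hS hs); omega)]
    have key := wAux_append t (S.sort (· ≤ ·)) 0 (n + 2) ((Finset.sortedLT_sort S).pairwise)
      (fun s hs => by have := hmemS s hs; omega) (by omega)
    norm_num at key
    rw [key]
    push_cast
    ring

theorem statement4 (t : ℕ) (ht : 1 ≤ t) (n : ℕ) (S : Finset ℕ)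
    (hS : S ⊆ Finset.Icc 1 n) :
    vWeight t n S = vWeight t n (S.image (fun s => n + 1 - s)) := by
  have hS' : S.image (fun s => n + 1 - s) ⊆ Finset.Icc 1 n := by
    intro x hx
    obtain ⟨s, hs, rfl⟩ := Finset.mem_image.1 hx
    have := Finset.mem_Icc.1 (hS hs)
    exact Finset.mem_Icc.2 (by omega)
  rw [vWeight_eq_sAux t n S hS, vWeight_eq_sAux t n _ hS']
  congr 1
  rw [sort_image_rev S n hS]
  have := sAux_rev t (n + 1) (S.sort (· ≤ ·)) 0 (n + 2) ((Finset.sortedLT_sort S).pairwise)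
    (fun s hs => by
      have := Finset.mem_Icc.1 (hS ((Finset.mem_sort _).1 hs))
      omega)
    (by omega) (by omega)
  simpa using this
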